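/- Let μ be a Borel probability measure on Σ = {1,…,m}^ℕ and let δ ∈ (0,1). Then for μ-a.e. x ∈ Σ, limsup_{n→∞} (1/n) · log( μ([x_1⋯x_{⌈(1−δ)n⌉}]) / μ([x_1⋯x_n]) ) ≤ δ·log m, where ⌈·⌉ denotes the ceiling function. -/

import Mathlib

open MeasureTheory Filter Topology Metric
open scoped ENNReal NNReal

noncomputable section

namespace SelfAffineProj

/-- The word product `T_{x|n} = T_{x_1} ⋯ T_{x_n}`. -/
def wordProd {m d : ℕ} (T : Fin m → Matrix (Fin d) (Fin d) ℝ) (x : ℕ → Fin m) (n : ℕ) :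
    Matrix (Fin d) (Fin d) ℝ :=
  ((List.range n).map fun k => T (x k)).prod

/-- The cylinder `[x|n]` of sequences agreeing with `x` on the first `n` coordinates. -/
def cylinder {m : ℕ} (x : ℕ → Fin m) (n : ℕ) : Set (ℕ → Fin m) :=
  { y | ∀ k < n, y k = x k }

theorem _root_.Matrix.isHermitian_transpose_mul_self {d : ℕ} (M : Matrix (Fin d) (Fin d) ℝ) :
    (M.transpose * M).IsHermitian := by
  rw [← Matrix.conjTranspose_eq_transpose_of_trivial]
  exact Matrix.isHermitian_conjTranspose_mul_self M

/-- `sval M k` is the `(k+1)`-th largest singular value `α_{k+1}(M)` of `M`. -/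
def sval {d : ℕ} (M : Matrix (Fin d) (Fin d) ℝ) (k : Fin d) : ℝ :=
  Real.sqrt
    ((Matrix.isHermitian_transpose_mul_self M).eigenvalues
      (Tuple.sort (Matrix.isHermitian_transpose_mul_self M).eigenvalues k.rev))

/-- `svalN M i` is `α_{i+1}(M)` for `i < d`, junk value `0` otherwise. -/
def svalN {d : ℕ} (M : Matrix (Fin d) (Fin d) ℝ) (i : ℕ) : ℝ :=
  if h : i < d then sval M ⟨i, h⟩ else 0

/-- The singular value function `φ^s`. -/
def phi {d : ℕ} (s : ℝ) (M : Matrix (Fin d) (Fin d) ℝ) : ℝ :=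
  if s < (d : ℝ) then
    (∏ i ∈ Finset.range ⌊s⌋₊, svalN M i) * svalN M ⌊s⌋₊ ^ (s - (⌊s⌋₊ : ℝ))
  else |M.det| ^ (s / (d : ℝ))

/-- The singular value function extended to `s ∈ [0,∞]`, with `φ^∞ = 0`. -/
def phiE {d : ℕ} (s : ℝ≥0∞) (M : Matrix (Fin d) (Fin d) ℝ) : ℝ≥0∞ :=
  if s = ⊤ then 0 else ENNReal.ofReal (phi s.toReal M)

/-- The continuous linear map on Euclidean space induced by a matrix. -/
def mCLM {d : ℕ} (M : Matrix (Fin d) (Fin d) ℝ) :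
    EuclideanSpace ℝ (Fin d) →L[ℝ] EuclideanSpace ℝ (Fin d) :=
  Matrix.toEuclideanCLM (𝕜 := ℝ) M

/-- `seqComp F n = F 0 ∘ F 1 ∘ ⋯ ∘ F (n-1)`. -/
def seqComp {E : Type*} (F : ℕ → E → E) : ℕ → E → E
  | 0 => id
  | n + 1 => F 0 ∘ seqComp (fun k => F (k + 1)) n

/-- The coding map `π^a(x) = lim_n f^a_{x_1} ∘ ⋯ ∘ f^a_{x_n}(0)`. -/
def codingMap {m d : ℕ} (T : Fin m → Matrix (Fin d) (Fin d) ℝ)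
    (a : Fin m → EuclideanSpace ℝ (Fin d)) (x : ℕ → Fin m) : EuclideanSpace ℝ (Fin d) :=
  limUnder atTop fun n => seqComp (fun k y => mCLM (T (x k)) y + a (x k)) n 0

/-- `Z_M(r) = ∏_{k=1}^d min{r, α_k(M)}/α_k(M)`. -/
def Zmat {d : ℕ} (M : Matrix (Fin d) (Fin d) ℝ) (r : ℝ) : ℝ :=
  ∏ k : Fin d, min r (sval M k) / sval M k

/-- `Z_{x|n}(r)`. -/
def Zword {m d : ℕ} (T : Fin m → Matrix (Fin d) (Fin d) ℝ) (x : ℕ → Fin m) (n : ℕ)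
    (r : ℝ) : ℝ :=
  Zmat (wordProd T x n) r

/-- The length `|x ∧ y|` of the longest common initial segment of `x` and `y`. -/
def firstDiff {m : ℕ} (x y : ℕ → Fin m) : ℕ :=
  sInf { n | x n ≠ y n }

/-- `Z_{x ∧ y}(r)`, with the convention `Z_{x ∧ y}(r) = 1` for `x = y`. -/
def Zwedge {m d : ℕ} (T : Fin m → Matrix (Fin d) (Fin d) ℝ) (x y : ℕ → Fin m) (r : ℝ) : ℝ :=
  letI := Classical.dec (x = y)
  if x = y then 1 else Zword T x (firstDiff x y) r

/-- `G_μ(x,r) = ∫ Z_{x∧y}(r) dμ(y)`. -/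
def Gfun {m d : ℕ} (T : Fin m → Matrix (Fin d) (Fin d) ℝ) (μ : Measure (ℕ → Fin m))
    (x : ℕ → Fin m) (r : ℝ) : ℝ :=
  ∫ y, Zwedge T x y r ∂μ

/-- `D(μ,x) = limsup_{r→0} log G_μ(x,r)/log r`. -/
def Dfun {m d : ℕ} (T : Fin m → Matrix (Fin d) (Fin d) ℝ) (μ : Measure (ℕ → Fin m))
    (x : ℕ → Fin m) : ℝ≥0∞ :=
  limsup (fun r : ℝ => ENNReal.ofReal (Real.log (Gfun T μ x r) / Real.log r)) (𝓝[>] 0)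

/-- Lower local dimension of a measure on `ℝ^d` at a point. -/
def lowerLocalDim {d : ℕ} (η : Measure (EuclideanSpace ℝ (Fin d)))
    (z : EuclideanSpace ℝ (Fin d)) : ℝ≥0∞ :=
  liminf (fun r : ℝ => ENNReal.ofReal (Real.log (η (closedBall z r)).toReal / Real.log r))
    (𝓝[>] 0)

/-- Upper local dimension of a measure on `ℝ^d` at a point. -/
def upperLocalDim {d : ℕ} (η : Measure (EuclideanSpace ℝ (Fin d)))
    (z : EuclideanSpace ℝ (Fin d)) : ℝ≥0∞ :=
  limsup (fun r : ℝ => ENNReal.ofReal (Real.log (η (closedBall z r)).toReal / Real.log r))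
    (𝓝[>] 0)

/-- Lower Hausdorff dimension of a measure. -/
def lowerHausdorffDim {d : ℕ} (η : Measure (EuclideanSpace ℝ (Fin d))) : ℝ≥0∞ :=
  essInf (lowerLocalDim η) η

/-- Upper Hausdorff dimension of a measure. -/
def upperHausdorffDim {d : ℕ} (η : Measure (EuclideanSpace ℝ (Fin d))) : ℝ≥0∞ :=
  essSup (lowerLocalDim η) η

/-- Lower packing dimension of a measure. -/
def lowerPackingDim {d : ℕ} (η : Measure (EuclideanSpace ℝ (Fin d))) : ℝ≥0∞ :=
  essInf (upperLocalDim η) η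

/-- Upper packing dimension of a measure. -/
def upperPackingDim {d : ℕ} (η : Measure (EuclideanSpace ℝ (Fin d))) : ℝ≥0∞ :=
  essSup (upperLocalDim η) η

/-- A measure is exact dimensional if its local dimension exists a.e. and is a.e. constant. -/
def exactDimensional {d : ℕ} (η : Measure (EuclideanSpace ℝ (Fin d))) : Prop :=
  ∃ C : ℝ≥0∞, ∀ᵐ z ∂η, lowerLocalDim η z = C ∧ upperLocalDim η z = C

/-- Cylinder of a finite word given as a list. -/
def cylL {m : ℕ} (I : List (Fin m)) : Set (ℕ → Fin m) :=
  { y | ∀ (k : ℕ) (hk : k < I.length), y k = I.get ⟨k, hk⟩ }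

/-- Word product for a word given as a list. -/
def wordProdL {m d : ℕ} (T : Fin m → Matrix (Fin d) (Fin d) ℝ) (I : List (Fin m)) :
    Matrix (Fin d) (Fin d) ℝ :=
  (I.map T).prod

/-- `M^s_n(E)`: the Falconer net pre-measure at level `n`. -/
def netMeasureAux {m d : ℕ} (T : Fin m → Matrix (Fin d) (Fin d) ℝ) (s : ℝ)
    (E : Set (ℕ → Fin m)) (n : ℕ) : ℝ≥0∞ :=
  ⨅ (C : Set (List (Fin m))) (_ : ∀ I ∈ C, n ≤ I.length) (_ : E ⊆ ⋃ I ∈ C, cylL I),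
    ∑' I : C, ENNReal.ofReal (phi s (wordProdL T (I : List (Fin m))))

/-- `M^s(E) = lim_n M^s_n(E)`. -/
def netMeasure {m d : ℕ} (T : Fin m → Matrix (Fin d) (Fin d) ℝ) (s : ℝ)
    (E : Set (ℕ → Fin m)) : ℝ≥0∞ :=
  ⨆ n, netMeasureAux T s E n

/-- `dim_M E`. -/
def dimM {m d : ℕ} (T : Fin m → Matrix (Fin d) (Fin d) ℝ) (E : Set (ℕ → Fin m)) : ℝ :=
  sInf { s : ℝ | 0 ≤ s ∧ netMeasure T s E < ⊤ }

/-- The energy `∬ Z_{x∧y}(r) dμ(x) dμ(y)`. -/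
def energy {m d : ℕ} (T : Fin m → Matrix (Fin d) (Fin d) ℝ) (μ : Measure (ℕ → Fin m))
    (r : ℝ) : ℝ :=
  ∫ x, ∫ y, Zwedge T x y r ∂μ ∂μ

/-- The `r`-capacity `C_r(E)` of a set `E ⊆ Σ`. -/
def capFn {m d : ℕ} (T : Fin m → Matrix (Fin d) (Fin d) ℝ) (E : Set (ℕ → Fin m)) (r : ℝ) : ℝ :=
  (sInf { v : ℝ | ∃ μ : Measure (ℕ → Fin m),
      IsProbabilityMeasure μ ∧ μ Eᶜ = 0 ∧ v = energy T μ r })⁻¹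

/-- Lower capacity dimension. -/
def lowerCapDim {m d : ℕ} (T : Fin m → Matrix (Fin d) (Fin d) ℝ)
    (E : Set (ℕ → Fin m)) : ℝ≥0∞ :=
  liminf (fun r : ℝ => ENNReal.ofReal (Real.log (capFn T E r) / (-Real.log r))) (𝓝[>] 0)

/-- Upper capacity dimension. -/
def upperCapDim {m d : ℕ} (T : Fin m → Matrix (Fin d) (Fin d) ℝ)
    (E : Set (ℕ → Fin m)) : ℝ≥0∞ :=
  limsup (fun r : ℝ => ENNReal.ofReal (Real.log (capFn T E r) / (-Real.log r))) (𝓝[>] 0)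

/-- `N_r(F)`: the minimal number of sets of diameter at most `r` needed to cover `F`. -/
def coverNum {d : ℕ} (F : Set (EuclideanSpace ℝ (Fin d))) (r : ℝ) : ℝ≥0∞ :=
  ⨅ (C : Finset (Set (EuclideanSpace ℝ (Fin d)))) (_ : F ⊆ ⋃ s ∈ C, s)
    (_ : ∀ s ∈ C, Metric.diam s ≤ r), (C.card : ℝ≥0∞)

/-- Lower box-counting dimension. -/
def lowerBoxDim {d : ℕ} (F : Set (EuclideanSpace ℝ (Fin d))) : ℝ≥0∞ :=
  liminf (fun r : ℝ => ENNReal.ofReal (Real.log (coverNum F r).toReal / (-Real.log r))) (𝓝[>] 0)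

/-- Upper box-counting dimension. -/
def upperBoxDim {d : ℕ} (F : Set (EuclideanSpace ℝ (Fin d))) : ℝ≥0∞ :=
  limsup (fun r : ℝ => ENNReal.ofReal (Real.log (coverNum F r).toReal / (-Real.log r))) (𝓝[>] 0)

def restr (m k : ℕ) (y : ℕ → Fin m) : Fin k → Fin m := fun i => y i

lemma measurable_restr (m k : ℕ) : Measurable (restr m k) :=
  measurable_pi_lambda _ fun i => measurable_pi_apply _

lemma cylinder_eq (m : ℕ) (x : ℕ → Fin m) (n : ℕ) :
    cylinder x n = restr m n ⁻¹' {restr m n x} := by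
  ext y
  simp only [cylinder, Set.mem_setOf_eq, Set.mem_preimage, Set.mem_singleton_iff, funext_iff,
    restr]
  constructor
  · intro h i; exact h i i.isLt
  · intro h k hk; exact h ⟨k, hk⟩

lemma cylinder_anti {m : ℕ} (x : ℕ → Fin m) {k n : ℕ} (h : k ≤ n) :
    cylinder x n ⊆ cylinder x k := fun y hy j hj => hy j (lt_of_lt_of_le hj h)

lemma sum_measure_restr (m k : ℕ) (μ : Measure (ℕ → Fin m)) [IsProbabilityMeasure μ] :
    ∑ v : Fin k → Fin m, μ (restr m k ⁻¹' {v}) = 1 := by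
  rw [← tsum_fintype (L := SummationFilter.unconditional _), ← measure_iUnion]
  · rw [← Set.preimage_iUnion]
    have : (⋃ v : Fin k → Fin m, ({v} : Set (Fin k → Fin m))) = Set.univ := by
      simp [Set.eq_univ_iff_forall]
    rw [this, Set.preimage_univ, measure_univ]
  · intro a b hab
    apply Disjoint.preimage
    simp [hab, Set.disjoint_singleton]
  · intro v; exact measurable_restr m k (measurableSet_singleton v)

lemma sum_comp_castLE {M : Type*} [AddCommMonoid M] {m k n : ℕ} (h : k ≤ n)
    (f : (Fin k → Fin m) → M) :
    ∑ w : Fin n → Fin m, f (fun i => w (Fin.castLE h i)) =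
      m ^ (n - k) • ∑ v : Fin k → Fin m, f v := by
  let e : (Fin n → Fin m) ≃ ((Fin k → Fin m) × (Fin (n - k) → Fin m)) :=
    (Equiv.arrowCongr ((finCongr (Nat.add_sub_cancel' h).symm).trans finSumFinEquiv.symm)
      (Equiv.refl _)).trans (Equiv.sumArrowEquivProdArrow _ _ _)
  have he : ∀ w : Fin n → Fin m, (fun i => w (Fin.castLE h i)) = (e w).1 := by
    intro w
    funext i
    simp only [e, Equiv.trans_apply, Equiv.sumArrowEquivProdArrow, Equiv.arrowCongr_apply,
      Equiv.coe_fn_mk, Function.comp_apply, Equiv.refl_apply]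
    congr 1
  calc ∑ w : Fin n → Fin m, f (fun i => w (Fin.castLE h i))
      = ∑ w : Fin n → Fin m, f (e w).1 := by simp_rw [he]
    _ = ∑ p : (Fin k → Fin m) × (Fin (n - k) → Fin m), f p.1 :=
        Fintype.sum_equiv e _ _ fun w => rfl
    _ = ∑ v : Fin k → Fin m, ∑ _u : Fin (n - k) → Fin m, f v := by
        rw [Fintype.sum_prod_type]
    _ = m ^ (n - k) • ∑ v : Fin k → Fin m, f v := by
        simp only [Finset.sum_const, Finset.card_univ, Fintype.card_fun, Fintype.card_fin]
        rw [← Finset.smul_sum]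


lemma measure_bad_le {m : ℕ} (hm : 1 ≤ m) (μ : Measure (ℕ → Fin m)) [IsProbabilityMeasure μ]
    {δ ε : ℝ} (hδ0 : 0 < δ) (hδ1 : δ < 1) (hε : 0 < ε) (n : ℕ) :
    μ { x | Real.exp ((δ * Real.log m + ε) * n) * (μ (cylinder x n)).toReal
          < (μ (cylinder x ⌈(1 - δ) * (n : ℝ)⌉₊)).toReal }
      ≤ ENNReal.ofReal (Real.exp (-ε * n)) := by
  classical
  set k : ℕ := ⌈(1 - δ) * (n : ℝ)⌉₊ with hk
  have hkn : k ≤ n := by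
    rw [hk]
    apply Nat.ceil_le.2
    nlinarith [Nat.cast_nonneg (α := ℝ) n]
  set R : ℝ := Real.exp ((δ * Real.log m + ε) * n) with hR
  have hRpos : 0 < R := Real.exp_pos _
  set σ : (Fin n → Fin m) → (Fin k → Fin m) := fun w i => w (Fin.castLE hkn i) with hσ
  set S : Finset (Fin n → Fin m) :=
    Finset.univ.filter (fun w => R * (μ (restr m n ⁻¹' {w})).toReal
      < (μ (restr m k ⁻¹' {σ w})).toReal) with hS
  have hsub : { x | R * (μ (cylinder x n)).toReal < (μ (cylinder x k)).toReal }
      ⊆ ⋃ w ∈ S, restr m n ⁻¹' {w} := by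
    intro x hx
    have h1 : cylinder x n = restr m n ⁻¹' {restr m n x} := cylinder_eq m x n
    have h2 : cylinder x k = restr m k ⁻¹' {σ (restr m n x)} := by
      rw [cylinder_eq m x k]
      rfl
    refine Set.mem_biUnion (Finset.mem_filter.2 ⟨Finset.mem_univ _, ?_⟩) rfl
    rw [← h1, ← h2]
    exact hx
  have hnk : ((n - k : ℕ) : ℝ) ≤ δ * n := by
    have h1 : (1 - δ) * (n:ℝ) ≤ (k:ℝ) := Nat.le_ceil _
    have h2 : ((n - k : ℕ) : ℝ) = (n:ℝ) - k := by
      rw [Nat.cast_sub hkn]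
    linarith
  have hlogm : 0 ≤ Real.log m := Real.log_nonneg (by exact_mod_cast hm)
  calc μ _ ≤ ∑ w ∈ S, μ (restr m n ⁻¹' {w}) :=
        le_trans (measure_mono hsub) (measure_biUnion_finset_le _ _)
    _ ≤ ∑ w ∈ S, ENNReal.ofReal R⁻¹ * μ (restr m k ⁻¹' {σ w}) := by
        apply Finset.sum_le_sum
        intro w hw
        have hlt := (Finset.mem_filter.1 hw).2
        have h1 : (μ (restr m n ⁻¹' {w})).toReal
            ≤ R⁻¹ * (μ (restr m k ⁻¹' {σ w})).toReal := by
          rw [inv_mul_eq_div, le_div_iff₀ hRpos, mul_comm]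
          exact hlt.le
        calc μ (restr m n ⁻¹' {w}) = ENNReal.ofReal (μ (restr m n ⁻¹' {w})).toReal :=
              (ENNReal.ofReal_toReal (measure_ne_top μ _)).symm
          _ ≤ ENNReal.ofReal (R⁻¹ * (μ (restr m k ⁻¹' {σ w})).toReal) :=
              ENNReal.ofReal_le_ofReal h1
          _ = ENNReal.ofReal R⁻¹ * ENNReal.ofReal (μ (restr m k ⁻¹' {σ w})).toReal :=
              ENNReal.ofReal_mul (by positivity)
          _ = ENNReal.ofReal R⁻¹ * μ (restr m k ⁻¹' {σ w}) := by
              rw [ENNReal.ofReal_toReal (measure_ne_top μ _)]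
    _ ≤ ∑ w : Fin n → Fin m, ENNReal.ofReal R⁻¹ * μ (restr m k ⁻¹' {σ w}) :=
        Finset.sum_le_sum_of_subset (Finset.subset_univ _)
    _ = ENNReal.ofReal R⁻¹ * ∑ w : Fin n → Fin m, μ (restr m k ⁻¹' {σ w}) := by
        rw [Finset.mul_sum]
    _ = ENNReal.ofReal R⁻¹ * ((m ^ (n - k) : ℕ) : ℝ≥0∞) := by
        rw [hσ]
        rw [sum_comp_castLE hkn (fun v => μ (restr m k ⁻¹' {v})), sum_measure_restr,
          nsmul_eq_mul, mul_one]
    _ ≤ ENNReal.ofReal (Real.exp (-ε * n)) := by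
        have hcast : ((m ^ (n - k) : ℕ) : ℝ≥0∞) = ENNReal.ofReal ((m:ℝ) ^ (n - k)) := by
          rw [← ENNReal.ofReal_natCast]
          push_cast
          ring_nf
        rw [hcast, ← ENNReal.ofReal_mul (by positivity)]
        apply ENNReal.ofReal_le_ofReal
        have hmexp : (m:ℝ) ^ (n - k) = Real.exp (((n - k : ℕ) : ℝ) * Real.log m) := by
          rw [Real.exp_nat_mul, Real.exp_log]
          have : (0:ℕ) < m := hm
          exact_mod_cast this
        rw [hmexp, hR, ← Real.exp_neg, ← Real.exp_add, Real.exp_le_exp]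
        nlinarith [mul_le_mul_of_nonneg_right hnk hlogm]

lemma aux_ae {m : ℕ} (hm : 1 ≤ m) (μ : Measure (ℕ → Fin m)) [IsProbabilityMeasure μ]
    {δ ε : ℝ} (hδ0 : 0 < δ) (hδ1 : δ < 1) (hε : 0 < ε) :
    ∀ᵐ x ∂μ, limsup (fun n : ℕ =>
        (1 / (n : ℝ)) * Real.log ((μ (cylinder x ⌈(1 - δ) * (n : ℝ)⌉₊)).toReal /
          (μ (cylinder x n)).toReal)) atTop ≤ δ * Real.log m + ε := by
  have hm' : (1:ℝ) ≤ m := by exact_mod_cast hm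
  have hlog : 0 ≤ Real.log m := Real.log_nonneg hm'
  set B : ℕ → Set (ℕ → Fin m) := fun n =>
    { x | Real.exp ((δ * Real.log m + ε) * n) * (μ (cylinder x n)).toReal
        < (μ (cylinder x ⌈(1 - δ) * (n : ℝ)⌉₊)).toReal } with hB
  have hgeom : (∑' n : ℕ, ENNReal.ofReal (Real.exp (-ε * n))) ≠ ⊤ := by
    have h1 : ∀ n : ℕ, ENNReal.ofReal (Real.exp (-ε * n))
        = ENNReal.ofReal (Real.exp (-ε)) ^ n := by
      intro n
      rw [← ENNReal.ofReal_pow (Real.exp_nonneg _), ← Real.exp_nat_mul]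
      ring_nf
    rw [tsum_congr h1, ENNReal.tsum_geometric]
    apply ENNReal.inv_ne_top.2
    rw [ne_eq, tsub_eq_zero_iff_le, not_le]
    exact ENNReal.ofReal_lt_one.2 (Real.exp_lt_one_iff.2 (by linarith))
  have hsum : (∑' n, μ (B n)) ≠ ⊤ :=
    ne_top_of_le_ne_top hgeom
      (ENNReal.tsum_le_tsum (fun n => measure_bad_le hm μ hδ0 hδ1 hε n))
  filter_upwards [MeasureTheory.ae_eventually_notMem hsum] with x hx
  have hpos : ∀ n : ℕ, 0 ≤ (1 / (n : ℝ)) *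
      Real.log ((μ (cylinder x ⌈(1 - δ) * (n : ℝ)⌉₊)).toReal / (μ (cylinder x n)).toReal) := by
    intro n
    have hkn : ⌈(1 - δ) * (n : ℝ)⌉₊ ≤ n :=
      Nat.ceil_le.2 (by nlinarith [Nat.cast_nonneg (α := ℝ) n])
    set b := (μ (cylinder x n)).toReal with hbdef
    set a := (μ (cylinder x ⌈(1 - δ) * (n : ℝ)⌉₊)).toReal with hadef
    have hba : b ≤ a :=
      ENNReal.toReal_mono (measure_ne_top μ _) (measure_mono (cylinder_anti x hkn))
    have hb0 : (0:ℝ) ≤ b := ENNReal.toReal_nonneg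
    rcases eq_or_lt_of_le hb0 with hb | hb
    · rw [← hb, div_zero, Real.log_zero, mul_zero]
    · have h1 : 1 ≤ a / b := (one_le_div hb).2 hba
      exact mul_nonneg (by positivity) (Real.log_nonneg h1)
  have hev : ∀ᶠ n : ℕ in atTop, (1 / (n : ℝ)) *
      Real.log ((μ (cylinder x ⌈(1 - δ) * (n : ℝ)⌉₊)).toReal / (μ (cylinder x n)).toReal)
      ≤ δ * Real.log m + ε := by
    filter_upwards [hx, eventually_ge_atTop 1] with n hxn hn1
    have hkn : ⌈(1 - δ) * (n : ℝ)⌉₊ ≤ n :=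
      Nat.ceil_le.2 (by nlinarith [Nat.cast_nonneg (α := ℝ) n])
    simp only [hB, Set.mem_setOf_eq, not_lt] at hxn
    set b := (μ (cylinder x n)).toReal with hbdef
    set a := (μ (cylinder x ⌈(1 - δ) * (n : ℝ)⌉₊)).toReal with hadef
    have hba : b ≤ a :=
      ENNReal.toReal_mono (measure_ne_top μ _) (measure_mono (cylinder_anti x hkn))
    have hb0 : (0:ℝ) ≤ b := ENNReal.toReal_nonneg
    rcases eq_or_lt_of_le hb0 with hb | hb
    · rw [← hb, div_zero, Real.log_zero, mul_zero]
      nlinarith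
    · have hratio : a / b ≤ Real.exp ((δ * Real.log m + ε) * n) := by
        rw [div_le_iff₀ hb]
        exact hxn
      have hapos : 0 < a := lt_of_lt_of_le hb hba
      have hlog2 : Real.log (a / b) ≤ (δ * Real.log m + ε) * n := by
        calc Real.log (a / b) ≤ Real.log (Real.exp ((δ * Real.log m + ε) * n)) :=
              Real.log_le_log (by positivity) hratio
          _ = (δ * Real.log m + ε) * n := Real.log_exp _
      have hn0 : (0:ℝ) < n := by exact_mod_cast hn1
      calc (1 / (n:ℝ)) * Real.log (a / b)
          ≤ (1 / (n:ℝ)) * ((δ * Real.log m + ε) * n) :=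
            mul_le_mul_of_nonneg_left hlog2 (by positivity)
        _ = δ * Real.log m + ε := by field_simp
  exact limsup_le_of_le (isCoboundedUnder_le_of_le atTop hpos) hev



theorem statement13 (m : ℕ) (hm : 1 ≤ m)
    (μ : Measure (ℕ → Fin m)) (hμ : IsProbabilityMeasure μ)
    (δ : ℝ) (hδ : δ ∈ Set.Ioo (0 : ℝ) 1) :
    ∀ᵐ x ∂μ,
      limsup (fun n : ℕ =>
          (1 / (n : ℝ)) *
            Real.log ((μ (cylinder x ⌈(1 - δ) * (n : ℝ)⌉₊)).toReal /
              (μ (cylinder x n)).toReal)) atTop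
        ≤ δ * Real.log m := by
  haveI := hμ
  obtain ⟨hδ0, hδ1⟩ := hδ
  have key : ∀ j : ℕ, ∀ᵐ x ∂μ,
      limsup (fun n : ℕ =>
          (1 / (n : ℝ)) *
            Real.log ((μ (cylinder x ⌈(1 - δ) * (n : ℝ)⌉₊)).toReal /
              (μ (cylinder x n)).toReal)) atTop
        ≤ δ * Real.log m + 1 / ((j : ℝ) + 1) :=
    fun j => aux_ae hm μ hδ0 hδ1 (by positivity)
  filter_upwards [ae_all_iff.2 key] with x hx
  by_contra hcon
  push_neg at hcon
  obtain ⟨j, hj⟩ := exists_nat_one_div_lt (sub_pos.2 hcon)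
  have := hx j
  linarith


end SelfAffineProj
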